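/- For the example f_ξ(x) = (1/2)(x+r)² w.p. ω and (1/2)x² w.p. 1-ω, with ω ∈ (1/2, 1), suppose quantile clipping normalizes the gradient from the first branch to have magnitude 1 while leaving the second branch unclipped, so the estimator is g(x) = 1 w.p. ω and g(x) = x w.p. 1-ω. Then the expected fixed point x† (the point with E[g(x†)] = 0) equals -ω/(1-ω), and for any r ≠ 1/(1-ω), |∇f(x†)| = |rω - ω/(1-ω)| > 0, so the fixed point of QC-SGD is not a stationary point of f. -/
import Mathlib


/-- The expected fixed point x† = -ω/(1-ω) of QC-SGD on the example satisfies
E[g(x†)] = 0, and |∇f(x†)| = |rω - ω/(1-ω)| > 0 whenever r ≠ 1/(1-ω):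
the fixed point is not a stationary point of f. -/
theorem example_fixed_point_bias (ω r : ℝ) (hω : ω ∈ Set.Ioo (1/2 : ℝ) 1) (hr : 0 < r)
    (Eg gradf : ℝ → ℝ)
    (hEg : ∀ x, Eg x = ω * 1 + (1 - ω) * x)       -- E[g(x)], g(x)=1 w.p. ω, x w.p. 1-ω
    (hgradf : ∀ x, gradf x = x + r * ω) :          -- ∇f(x)
    Eg (-(ω / (1 - ω))) = 0 ∧
    (∀ x, Eg x = 0 → x = -(ω / (1 - ω))) ∧
    |gradf (-(ω / (1 - ω)))| = |r * ω - ω / (1 - ω)| ∧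
    (r ≠ 1 / (1 - ω) → 0 < |gradf (-(ω / (1 - ω)))|) := by
  obtain ⟨h1, h2⟩ := hω
  have hne : (1 - ω) ≠ 0 := by linarith
  have hωne : ω ≠ 0 := by linarith
  refine ⟨?_, ?_, ?_, ?_⟩
  · rw [hEg]; field_simp; ring
  · intro x hx
    rw [hEg] at hx
    field_simp
    linarith
  · rw [hgradf]; ring_nf
  · intro hrne
    rw [hgradf, abs_pos]
    intro h
    apply hrne
    have : r * ω = ω / (1 - ω) := by linarith
    field_simp at this ⊢
    nlinarith [this]
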